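/- Let A be the adjacency matrix of a d-regular graph, d = p + 1, and K_t the non-backtracking walk count matrix. Then K_t = Q_t(A), where Q_t(x) = p^{t/2}(((p−1)/p)·U_t(x/(2√p)) + (2/p)·T_t(x/(2√p))) for t ≥ 2. -/

import Mathlib

open Polynomial Matrix Finset

/-- The number of non-backtracking walks of length `t` from `x` to `y` in `G`. -/
def nbWalkCount {V : Type} [Fintype V] [DecidableEq V] (G : SimpleGraph V)
    [DecidableRel G.Adj] (t : ℕ) (x y : V) : ℕ :=
  (Finset.univ.filter fun f : Fin (t + 1) → V =>
    f ⟨0, Nat.succ_pos t⟩ = x ∧ f ⟨t, Nat.lt_succ_self t⟩ = y ∧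
      (∀ i : Fin t, G.Adj (f ⟨i.1, by omega⟩) (f ⟨i.1 + 1, by omega⟩)) ∧
      (∀ i : Fin (t - 1), f ⟨i.1, by have := i.2; omega⟩ ≠
        f ⟨i.1 + 2, by have := i.2; omega⟩)).card

-- auxiliary definitions and lemmas

noncomputable def Rpoly (p t : ℕ) : Polynomial ℝ :=
  Real.sqrt p ^ t •
    ((((p : ℝ) - 1) / p) • (Polynomial.Chebyshev.U ℝ t).comp
        (Polynomial.C (1 / (2 * Real.sqrt p)) * Polynomial.X) +
      ((2 : ℝ) / p) • (Polynomial.Chebyshev.T ℝ t).comp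
        (Polynomial.C (1 / (2 * Real.sqrt p)) * Polynomial.X))

section
variable (p : ℕ) (hp : 2 ≤ p)
include hp

lemma sqp_pos : (0:ℝ) < Real.sqrt p := Real.sqrt_pos.2 (by positivity)

lemma sqp_sq : Real.sqrt p * Real.sqrt p = (p:ℝ) :=
  Real.mul_self_sqrt (by positivity)

lemma Rpoly_one : Rpoly p 1 = X := by
  have h0 : Real.sqrt p ≠ 0 := ne_of_gt (sqp_pos p hp)
  have hp0 : (p:ℝ) ≠ 0 := by positivity
  apply Polynomial.funext
  intro r
  simp only [Rpoly, Nat.cast_one, Polynomial.Chebyshev.U_one, Polynomial.Chebyshev.T_one,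
    eval_smul, eval_add, eval_comp, eval_mul, eval_C, eval_X, smul_eval, smul_eq_mul, eval_ofNat]
  have hs := sqp_sq p hp
  set s : ℝ := Real.sqrt p with hsdef
  clear_value s
  rw [← hs]
  field_simp
  ring

lemma Rpoly_two : Rpoly p 2 = X^2 - C ((p:ℝ)+1) := by
  have h0 : Real.sqrt p ≠ 0 := ne_of_gt (sqp_pos p hp)
  have hp0 : (p:ℝ) ≠ 0 := by positivity
  apply Polynomial.funext
  intro r
  simp only [Rpoly, Nat.cast_ofNat, Polynomial.Chebyshev.U_two, Polynomial.Chebyshev.T_two,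
    eval_smul, eval_add, eval_comp, eval_mul, eval_C, eval_X, smul_eval, smul_eq_mul,
    eval_sub, eval_pow, eval_one, eval_ofNat]
  have hs := sqp_sq p hp
  set s : ℝ := Real.sqrt p with hsdef
  clear_value s
  rw [← hs]
  field_simp
  ring

lemma Rpoly_rec (t : ℕ) :
    Rpoly p (t+2) = X * Rpoly p (t+1) - C (p:ℝ) * Rpoly p t := by
  have h0 : Real.sqrt p ≠ 0 := ne_of_gt (sqp_pos p hp)
  have hp0 : (p:ℝ) ≠ 0 := by positivity
  apply Polynomial.funext
  intro r
  have hU : Polynomial.Chebyshev.U ℝ ((t:ℤ)+2) =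
      2 * X * Polynomial.Chebyshev.U ℝ ((t:ℤ)+1) - Polynomial.Chebyshev.U ℝ t :=
    Polynomial.Chebyshev.U_add_two ℝ t
  have hT : Polynomial.Chebyshev.T ℝ ((t:ℤ)+2) =
      2 * X * Polynomial.Chebyshev.T ℝ ((t:ℤ)+1) - Polynomial.Chebyshev.T ℝ t :=
    Polynomial.Chebyshev.T_add_two ℝ t
  simp only [Rpoly]
  push_cast
  rw [hU, hT]
  simp only [eval_smul, eval_add, eval_comp, eval_mul, eval_C, eval_X, smul_eval, smul_eq_mul,
    eval_sub, eval_ofNat, eval_one]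
  generalize (Polynomial.Chebyshev.U ℝ ((t:ℤ)+1)).eval (1 / (2 * Real.sqrt p) * r) = u1
  generalize (Polynomial.Chebyshev.U ℝ (t:ℤ)).eval (1 / (2 * Real.sqrt p) * r) = u0
  generalize (Polynomial.Chebyshev.T ℝ ((t:ℤ)+1)).eval (1 / (2 * Real.sqrt p) * r) = t1
  generalize (Polynomial.Chebyshev.T ℝ (t:ℤ)).eval (1 / (2 * Real.sqrt p) * r) = t0
  have hs := sqp_sq p hp
  set s : ℝ := Real.sqrt p with hsdef
  clear_value s
  rw [← hs]
  field_simp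
  ring

end


section comb
variable {V : Type} [Fintype V] [DecidableEq V] (G : SimpleGraph V) [DecidableRel G.Adj]

lemma snoc_lt {n : ℕ} (g : Fin (n+1) → V) (v : V) (j : ℕ) (h : j < n+1) (h2 : j < n+2) :
    (Fin.snoc g v : Fin (n+2) → V) ⟨j, h2⟩ = g ⟨j, h⟩ := by
  have e : (⟨j, h2⟩ : Fin (n+2)) = Fin.castSucc ⟨j, h⟩ := rfl
  rw [e, Fin.snoc_castSucc]

lemma snoc_last' {n : ℕ} (g : Fin (n+1) → V) (v : V) (h2 : n+1 < n+2) :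
    (Fin.snoc g v : Fin (n+2) → V) ⟨n+1, h2⟩ = v := by
  have e : (⟨n+1, h2⟩ : Fin (n+2)) = Fin.last (n+1) := rfl
  rw [e, Fin.snoc_last]

def midSet (s : ℕ) (x y : V) : Finset (Fin (s+2) → V) :=
  Finset.univ.filter fun f =>
    f ⟨0, by omega⟩ = x ∧ G.Adj (f ⟨s+1, by omega⟩) y ∧
    (∀ i : Fin (s+1), G.Adj (f ⟨i.1, by omega⟩) (f ⟨i.1+1, by omega⟩)) ∧
    (∀ i : Fin s, f ⟨i.1, by omega⟩ ≠ f ⟨i.1+2, by omega⟩)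

lemma lemA (s : ℕ) (x y : V) :
    nbWalkCount G (s+2) x y
      = ((midSet G s x y).filter fun f => f ⟨s, by omega⟩ ≠ y).card := by
  rw [nbWalkCount]
  apply Finset.card_nbij' (i := fun f => Fin.init f) (j := fun g => Fin.snoc g y)
  · intro f hf
    simp only [Finset.mem_coe, Finset.mem_filter, Finset.mem_univ, true_and, midSet] at hf ⊢
    obtain ⟨h1, h2, h3, h4⟩ := hf
    refine ⟨⟨h1, ?_, ?_, ?_⟩, ?_⟩
    · have := h3 ⟨s+1, by omega⟩
      show G.Adj (f ⟨s+1, by omega⟩) y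
      rw [← h2]; exact this
    · intro i
      exact h3 ⟨i.1, by have := i.2; omega⟩
    · intro i
      exact h4 ⟨i.1, by have := i.2; omega⟩
    · have := h4 ⟨s, by omega⟩
      show f ⟨s, by omega⟩ ≠ y
      rw [← h2]; exact this
  · intro g hg
    simp only [Finset.mem_coe, Finset.mem_filter, Finset.mem_univ, true_and, midSet] at hg ⊢
    obtain ⟨⟨h1, h2, h3, h4⟩, h5⟩ := hg
    refine ⟨?_, ?_, ?_, ?_⟩
    · rw [snoc_lt g y 0 (by omega)]; exact h1
    · rw [snoc_last']
    · rintro ⟨iv, hiv⟩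
      by_cases hlt : iv < s + 1
      · rw [snoc_lt g y iv (by omega), snoc_lt g y (iv+1) (by omega)]
        exact h3 ⟨iv, hlt⟩
      · have he : iv = s + 1 := by omega
        subst he
        rw [snoc_lt g y (s+1) (by omega), snoc_last']
        exact h2
    · rintro ⟨iv, hiv⟩
      by_cases hlt : iv < s
      · rw [snoc_lt g y iv (by omega), snoc_lt g y (iv+2) (by omega)]
        exact h4 ⟨iv, hlt⟩
      · have he : iv = s := by omega
        subst he
        rw [snoc_lt g y iv (by omega), snoc_last']
        exact h5
  · intro f hf
    simp only [Finset.mem_coe, Finset.mem_filter, Finset.mem_univ, true_and] at hf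
    rw [show y = f (Fin.last (s+2)) from hf.2.1.symm]
    exact Fin.snoc_init_self f
  · intro g _
    simp only [Fin.init_snoc]

lemma lemC (s : ℕ) (x y : V) :
    ∑ z ∈ G.neighborFinset y, nbWalkCount G (s+1) x z = (midSet G s x y).card := by
  rw [Finset.card_eq_sum_card_fiberwise
    (f := fun f : Fin (s+2) → V => f ⟨s+1, by omega⟩) (t := G.neighborFinset y) ?_]
  · apply Finset.sum_congr rfl
    intro z hz
    rw [SimpleGraph.mem_neighborFinset] at hz
    rw [nbWalkCount]
    congr 1
    ext f
    simp only [midSet, Finset.mem_filter, Finset.mem_univ, true_and]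
    constructor
    · rintro ⟨h1, h2, h3, h4⟩
      exact ⟨⟨h1, by rw [h2]; exact hz.symm, h3, h4⟩, h2⟩
    · rintro ⟨⟨h1, h2, h3, h4⟩, h5⟩
      exact ⟨h1, h5, h3, h4⟩
  · intro f hf
    simp only [midSet, Finset.mem_coe, Finset.mem_filter, Finset.mem_univ, true_and] at hf
    rw [Finset.mem_coe, SimpleGraph.mem_neighborFinset]
    exact hf.2.1.symm

lemma lemB (m : ℕ) (x y : V) (p : ℕ) (hreg : G.IsRegularOfDegree (p+1)) :
    ((midSet G (m+1) x y).filter fun f => f ⟨m+1, by omega⟩ = y).card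
      = p * nbWalkCount G (m+1) x y := by
  rw [mul_comm, nbWalkCount]
  rw [Finset.card_eq_sum_card_fiberwise (f := fun f : Fin (m+3) → V => Fin.init f)
    (t := Finset.univ.filter fun g : Fin (m+1+1) → V =>
      g ⟨0, Nat.succ_pos (m+1)⟩ = x ∧ g ⟨m+1, Nat.lt_succ_self (m+1)⟩ = y ∧
      (∀ i : Fin (m+1), G.Adj (g ⟨i.1, by omega⟩) (g ⟨i.1 + 1, by omega⟩)) ∧
      (∀ i : Fin (m+1-1), g ⟨i.1, by have := i.2; omega⟩ ≠
        g ⟨i.1 + 2, by have := i.2; omega⟩)) ?_]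
  · rw [← smul_eq_mul, ← Finset.sum_const]
    apply Finset.sum_congr rfl
    intro g hg
    simp only [Finset.mem_filter, Finset.mem_univ, true_and] at hg
    obtain ⟨hg1, hg2, hg3, hg4⟩ := hg
    have hmem : g ⟨m, by omega⟩ ∈ G.neighborFinset y := by
      rw [SimpleGraph.mem_neighborFinset]
      have := hg3 ⟨m, by omega⟩
      rw [hg2] at this
      exact this.symm
    have hcard : ((G.neighborFinset y).erase (g ⟨m, by omega⟩)).card = p := by
      rw [Finset.card_erase_of_mem hmem]
      have := hreg y
      rw [SimpleGraph.degree] at this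
      omega
    rw [← hcard]
    apply Finset.card_nbij' (i := fun f => f ⟨m+2, by omega⟩)
      (j := fun v => Fin.snoc g v)
    · intro f hf
      simp only [midSet, Finset.mem_coe, Finset.mem_filter, Finset.mem_univ, true_and] at hf
      obtain ⟨⟨⟨h1, h2, h3, h4⟩, h5⟩, hfib⟩ := hf
      rw [Finset.mem_coe, Finset.mem_erase, SimpleGraph.mem_neighborFinset]
      constructor
      · intro e
        have heq : f ⟨m, by omega⟩ = g ⟨m, by omega⟩ := congrFun hfib ⟨m, by omega⟩
        exact h4 ⟨m, by omega⟩ (heq.trans e.symm)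
      · exact h2.symm
    · intro v hv
      rw [Finset.mem_coe, Finset.mem_erase, SimpleGraph.mem_neighborFinset] at hv
      obtain ⟨hv1, hv2⟩ := hv
      simp only [midSet, Finset.mem_coe, Finset.mem_filter, Finset.mem_univ, true_and]
      refine ⟨⟨⟨?_, ?_, ?_, ?_⟩, ?_⟩, ?_⟩
      · rw [snoc_lt g v 0 (by omega)]; exact hg1
      · rw [snoc_last']; exact hv2.symm
      · rintro ⟨iv, hiv⟩
        by_cases hlt : iv < m + 1
        · rw [snoc_lt g v iv (by omega), snoc_lt g v (iv+1) (by omega)]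
          exact hg3 ⟨iv, hlt⟩
        · have he : iv = m + 1 := by omega
          subst he
          rw [snoc_lt g v (m+1) (by omega), snoc_last', hg2]
          exact hv2
      · rintro ⟨iv, hiv⟩
        by_cases hlt : iv < m
        · rw [snoc_lt g v iv (by omega), snoc_lt g v (iv+2) (by omega)]
          exact hg4 ⟨iv, by omega⟩
        · have he : iv = m := by omega
          subst he
          rw [snoc_lt g v iv (by omega), snoc_last']
          exact fun e => hv1 e.symm
      · rw [snoc_lt g v (m+1) (by omega)]; exact hg2
      · simp only [Fin.init_snoc]
    · intro f hf
      simp only [Finset.mem_coe, Finset.mem_filter] at hf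
      rw [← hf.2]
      exact Fin.snoc_init_self f
    · intro v _
      exact snoc_last' g v (by omega)
  · intro f hf
    simp only [midSet, Finset.mem_coe, Finset.mem_filter, Finset.mem_univ, true_and] at hf ⊢
    obtain ⟨⟨h1, h2, h3, h4⟩, h5⟩ := hf
    exact ⟨h1, h5, fun i => h3 ⟨i.1, by have := i.2; omega⟩,
      fun i => h4 ⟨i.1, by have := i.2; omega⟩⟩

lemma nb_one (x y : V) : nbWalkCount G 1 x y = if G.Adj x y then 1 else 0 := by
  rw [nbWalkCount]
  by_cases h : G.Adj x y
  · rw [if_pos h, Finset.card_eq_one]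
    refine ⟨![x, y], ?_⟩
    ext f
    simp only [Finset.mem_filter, Finset.mem_univ, true_and, Finset.mem_singleton]
    constructor
    · rintro ⟨h1, h2, -, -⟩
      funext i
      fin_cases i
      · simpa using h1
      · simpa using h2
    · rintro rfl
      refine ⟨by simp, by simp, ?_, ?_⟩
      · intro i
        fin_cases i
        simpa using h
      · intro i
        exact absurd i.2 (by omega)
  · rw [if_neg h, Finset.card_eq_zero, Finset.filter_eq_empty_iff]
    rintro f - ⟨h1, h2, h3, -⟩
    have := h3 ⟨0, by omega⟩
    rw [h1, h2] at this
    exact h this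

lemma nb_two (x y : V) (p : ℕ) (hreg : G.IsRegularOfDegree (p+1)) :
    nbWalkCount G 2 x y + (p+1) * (if x = y then 1 else 0)
      = ((G.neighborFinset x) ∩ (G.neighborFinset y)).card := by
  by_cases h : x = y
  · subst h
    rw [if_pos rfl, mul_one, Finset.inter_self]
    have h0 : nbWalkCount G 2 x x = 0 := by
      rw [nbWalkCount, Finset.card_eq_zero, Finset.filter_eq_empty_iff]
      rintro f - ⟨h1, h2, -, h4⟩
      exact h4 ⟨0, by omega⟩ (h1.trans h2.symm)
    rw [h0, zero_add]
    have := hreg x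
    rw [SimpleGraph.degree] at this
    omega
  · rw [if_neg h, mul_zero, add_zero, nbWalkCount]
    apply Finset.card_nbij' (i := fun f => f ⟨1, by omega⟩) (j := fun v => ![x, v, y])
    · intro f hf
      simp only [Finset.mem_coe, Finset.mem_filter, Finset.mem_univ, true_and] at hf
      obtain ⟨h1, h2, h3, -⟩ := hf
      rw [Finset.mem_coe, Finset.mem_inter, SimpleGraph.mem_neighborFinset, SimpleGraph.mem_neighborFinset]
      constructor
      · have := h3 ⟨0, by omega⟩
        rw [h1] at this
        exact this
      · have := h3 ⟨1, by omega⟩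
        rw [h2] at this
        exact this.symm
    · intro v hv
      rw [Finset.mem_coe, Finset.mem_inter, SimpleGraph.mem_neighborFinset,
        SimpleGraph.mem_neighborFinset] at hv
      obtain ⟨hv1, hv2⟩ := hv
      simp only [Finset.mem_coe, Finset.mem_filter, Finset.mem_univ, true_and]
      refine ⟨by simp, by simp, ?_, ?_⟩
      · rintro ⟨iv, hiv⟩
        interval_cases iv
        · simpa using hv1
        · simpa using hv2.symm
      · rintro ⟨iv, hiv⟩
        interval_cases iv
        simpa using h
    · intro f hf
      simp only [Finset.mem_coe, Finset.mem_filter, Finset.mem_univ, true_and] at hf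
      obtain ⟨h1, h2, -, -⟩ := hf
      funext i
      fin_cases i
      · simpa using h1.symm
      · simp
      · simpa using h2.symm
    · intro v _
      simp

lemma nb_rec (m : ℕ) (x y : V) (p : ℕ) (hreg : G.IsRegularOfDegree (p+1)) :
    nbWalkCount G (m+3) x y + p * nbWalkCount G (m+1) x y
      = ∑ z ∈ G.neighborFinset y, nbWalkCount G (m+2) x z := by
  have hA := lemA G (m+1) x y
  have hB := lemB G m x y p hreg
  have hC := lemC G (m+1) x y
  have hsplit := Finset.card_filter_add_card_filter_not
    (s := midSet G (m+1) x y) (p := fun f : Fin (m+1+2) → V => f ⟨m+1, Nat.lt_succ_of_lt (Nat.lt_succ_self (m+1))⟩ = y)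
  rw [hC, hA, ← hB, add_comm]
  exact hsplit

end comb

section assembly
variable {V : Type} [Fintype V] [DecidableEq V] (G : SimpleGraph V) [DecidableRel G.Adj]

lemma aeval_comm_X (A : Matrix V V ℝ) (R : Polynomial ℝ) :
    A * Polynomial.aeval A R = Polynomial.aeval A R * A := by
  have h : Polynomial.aeval A (X * R) = Polynomial.aeval A (R * X) := by rw [mul_comm]
  simpa only [_root_.map_mul, aeval_X] using h

lemma claim (p : ℕ) (hp : 2 ≤ p) (hreg : G.IsRegularOfDegree (p+1)) :
    ∀ t : ℕ, ∀ x y : V, (nbWalkCount G (t+1) x y : ℝ)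
      = (Polynomial.aeval (G.adjMatrix ℝ) (Rpoly p (t+1))) x y := by
  intro t
  induction t using Nat.strong_induction_on with
  | _ t ih =>
    match t with
    | 0 =>
      intro x y
      rw [Rpoly_one p hp, aeval_X, nb_one, SimpleGraph.adjMatrix_apply]
      simp [apply_ite]
    | 1 =>
      intro x y
      rw [Rpoly_two p hp]
      have hnb := nb_two G x y p hreg
      have hcast := congrArg (Nat.cast : ℕ → ℝ) hnb
      push_cast at hcast
      have hA2 : ((G.adjMatrix ℝ) ^ 2) x y
          = (((G.neighborFinset x) ∩ (G.neighborFinset y)).card : ℝ) := by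
        rw [sq, SimpleGraph.adjMatrix_mul_apply]
        have : (G.neighborFinset x) ∩ (G.neighborFinset y)
            = (G.neighborFinset x).filter fun z => G.Adj z y := by
          ext z
          simp [SimpleGraph.mem_neighborFinset, SimpleGraph.adj_comm]
        rw [this, ← Finset.sum_boole]
        apply Finset.sum_congr rfl
        intro z _
        rw [SimpleGraph.adjMatrix_apply]
      rw [map_sub, map_pow, aeval_X, aeval_C, Matrix.sub_apply, hA2,
        Algebra.algebraMap_eq_smul_one, Matrix.smul_apply, Matrix.one_apply,
        smul_eq_mul]
      rw [mul_ite, mul_one, mul_zero] at hcast ⊢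
      by_cases hxy : x = y
      · rw [if_pos hxy] at hcast ⊢
        linarith
      · rw [if_neg hxy] at hcast ⊢
        linarith
    | (n+2) =>
      intro x y
      have hrec := nb_rec G n x y p hreg
      have hcast := congrArg (Nat.cast : ℕ → ℝ) hrec
      push_cast at hcast
      have hM : Polynomial.aeval (G.adjMatrix ℝ) (Rpoly p (n+3))
          = Polynomial.aeval (G.adjMatrix ℝ) (Rpoly p (n+2)) * (G.adjMatrix ℝ)
            - (p:ℝ) • Polynomial.aeval (G.adjMatrix ℝ) (Rpoly p (n+1)) := by
        have h1 : Rpoly p (n+3) = X * Rpoly p (n+2) - C (p:ℝ) * Rpoly p (n+1) :=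
          Rpoly_rec p hp (n+1)
        rw [h1, map_sub, _root_.map_mul, _root_.map_mul, aeval_X, aeval_C, ← aeval_comm_X,
          Algebra.algebraMap_eq_smul_one, smul_mul_assoc, one_mul, aeval_comm_X]
      have hMentry : Polynomial.aeval (G.adjMatrix ℝ) (Rpoly p (n+3)) x y
          = (∑ z ∈ G.neighborFinset y,
              Polynomial.aeval (G.adjMatrix ℝ) (Rpoly p (n+2)) x z)
            - (p:ℝ) * Polynomial.aeval (G.adjMatrix ℝ) (Rpoly p (n+1)) x y := by
        rw [hM, Matrix.sub_apply, SimpleGraph.mul_adjMatrix_apply, Matrix.smul_apply,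
          smul_eq_mul]
      have hsum : (∑ z ∈ G.neighborFinset y,
          Polynomial.aeval (G.adjMatrix ℝ) (Rpoly p (n+2)) x z)
          = ∑ z ∈ G.neighborFinset y, (nbWalkCount G (n+2) x z : ℝ) :=
        Finset.sum_congr rfl fun z _ => ((ih (n+1) (by omega) x z)).symm
      have ih0' : (nbWalkCount G (n+1) x y : ℝ)
          = Polynomial.aeval (G.adjMatrix ℝ) (Rpoly p (n+1)) x y := ih n (by omega) x y
      show (nbWalkCount G (n+3) x y : ℝ)
          = Polynomial.aeval (G.adjMatrix ℝ) (Rpoly p (n+3)) x y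
      rw [hMentry, hsum, ← ih0']
      linarith

end assembly

theorem nbWalkCount_eq_Q_eval {V : Type} [Fintype V] [DecidableEq V]
    (G : SimpleGraph V) [DecidableRel G.Adj] (p : ℕ) (hp : 2 ≤ p)
    (hreg : G.IsRegularOfDegree (p + 1)) (t : ℕ) (ht : 2 ≤ t) (x y : V) :
    (nbWalkCount G t x y : ℝ) =
      (Polynomial.aeval (G.adjMatrix ℝ))
        (Real.sqrt p ^ t •
          ((((p : ℝ) - 1) / p) • (Polynomial.Chebyshev.U ℝ t).comp
              (Polynomial.C (1 / (2 * Real.sqrt p)) * Polynomial.X) +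
            ((2 : ℝ) / p) • (Polynomial.Chebyshev.T ℝ t).comp
              (Polynomial.C (1 / (2 * Real.sqrt p)) * Polynomial.X))) x y := by
  obtain ⟨s, rfl⟩ : ∃ s, t = s + 1 := ⟨t - 1, by omega⟩
  exact claim G p hp hreg s x y
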